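/- Let n ≥ 3 and let G be the dihedral group of order 2^{n+1} (Mathlib's DihedralGroup (2^n)). Then every subgroup H of G of index 2 is subdirectly irreducible: for any two nontrivial normal subgroups N₁ and N₂ of H, the intersection N₁ ∩ N₂ is nontrivial. -/

import Mathlib

open DihedralGroup

lemma aux_r_pow {m : ℕ} (i : ZMod m) (k : ℕ) :
    (r i : DihedralGroup m) ^ k = r (k • i) := by
  induction k with
  | zero => rw [pow_zero, zero_nsmul, one_def]
  | succ k ih => rw [pow_succ, ih, r_mul_r, succ_nsmul]

lemma aux_zmod (n : ℕ) (hn : 1 ≤ n) (i : ZMod (2 ^ n)) (hi : i ≠ 0) :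
    ∃ k : ℕ, k • i = ((2 ^ (n - 1) : ℕ) : ZMod (2 ^ n)) := by
  haveI : NeZero (2 ^ n) := ⟨pow_ne_zero _ two_ne_zero⟩
  have hcard : addOrderOf i ∣ 2 ^ n := by
    have := addOrderOf_dvd_card (x := i)
    simpa [Nat.card_eq_fintype_card, ZMod.card] using this
  obtain ⟨m, hmn, hm⟩ := (Nat.dvd_prime_pow Nat.prime_two).mp hcard
  have hm1 : 1 ≤ m := by
    rcases Nat.eq_zero_or_pos m with h0 | h0
    · exfalso; apply hi
      have : addOrderOf i = 1 := by simp [hm, h0]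
      simpa using AddMonoid.addOrderOf_eq_one_iff.mp this
    · exact h0
  refine ⟨2 ^ (m - 1), ?_⟩
  set x : ZMod (2 ^ n) := (2 ^ (m - 1)) • i with hx
  have hxne : x ≠ 0 := by
    intro h0
    have : addOrderOf i ∣ 2 ^ (m - 1) := addOrderOf_dvd_of_nsmul_eq_zero h0
    rw [hm] at this
    have := Nat.le_of_dvd (Nat.pow_pos (n := m - 1) two_pos) this
    have := Nat.pow_le_pow_iff_right (a := 2) (by norm_num) |>.mp this
    omega
  have h2x : (2 : ℕ) • x = 0 := by
    rw [hx, ← mul_nsmul]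
    have : 2 ^ (m - 1) * 2 = 2 ^ m := by
      conv_rhs => rw [show m = (m - 1) + 1 by omega]
      rw [pow_succ]
    rw [this, ← hm, addOrderOf_nsmul_eq_zero]
  -- now show x = 2 ^ (n - 1)
  have hvx : ((2 * x.val : ℕ) : ZMod (2 ^ n)) = 0 := by
    push_cast
    rw [ZMod.natCast_val, ZMod.cast_id]
    rw [two_mul]
    rw [two_nsmul] at h2x
    exact h2x
  have hdvd : 2 ^ n ∣ 2 * x.val := (ZMod.natCast_eq_zero_iff _ _).mp hvx
  have hdvd' : 2 ^ (n - 1) ∣ x.val := by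
    have h2n : 2 ^ n = 2 * 2 ^ (n - 1) := by
      conv_lhs => rw [show n = 1 + (n - 1) by omega]
      rw [pow_add, pow_one]
    obtain ⟨c, hc⟩ := hdvd
    refine ⟨c, Nat.eq_of_mul_eq_mul_left (by norm_num : 0 < 2) ?_⟩
    rw [hc, h2n]; ring
  have hlt : x.val < 2 ^ n := x.val_lt
  have hne0 : x.val ≠ 0 := fun h => hxne ((ZMod.val_eq_zero x).mp h)
  obtain ⟨c, hc⟩ := hdvd'
  have hcpos : 0 < c := by
    rcases Nat.eq_zero_or_pos c with h0 | h0
    · exfalso; apply hne0; rw [hc, h0, mul_zero]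
    · exact h0
  have hc2 : c < 2 := by
    by_contra hcc
    push_neg at hcc
    have : 2 * 2 ^ (n - 1) ≤ x.val := by
      calc 2 * 2 ^ (n - 1) = 2 ^ (n - 1) * 2 := by ring
      _ ≤ 2 ^ (n - 1) * c := Nat.mul_le_mul_left _ hcc
      _ = x.val := hc.symm
    have h2n : 2 ^ n = 2 * 2 ^ (n - 1) := by
      conv_lhs => rw [show n = 1 + (n - 1) by omega]
      rw [pow_add, pow_one]
    omega
  have hcval : c = 1 := by omega
  have hxval : x.val = 2 ^ (n - 1) := by rw [hc, hcval, mul_one]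
  calc x = ((x.val : ℕ) : ZMod (2 ^ n)) := by rw [ZMod.natCast_val, ZMod.cast_id]
  _ = ((2 ^ (n - 1) : ℕ) : ZMod (2 ^ n)) := by rw [hxval]

lemma aux_key (n : ℕ) (hn : 3 ≤ n)
    (H : Subgroup (DihedralGroup (2 ^ n))) (hidx : H.index = 2)
    (N : Subgroup H) (hN : N.Normal) (h : N ≠ ⊥) :
    ∃ y : H, y ∈ N ∧ (y : DihedralGroup (2 ^ n)) = r ((2 ^ (n - 1) : ℕ)) := by
  have rot : ∀ (y : H) (j : ZMod (2 ^ n)), y ∈ N → (y : DihedralGroup (2 ^ n)) = r j →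
      j ≠ 0 → ∃ y : H, y ∈ N ∧ (y : DihedralGroup (2 ^ n)) = r ((2 ^ (n - 1) : ℕ)) := by
    intro y j hyN hyj hj
    obtain ⟨k, hk⟩ := aux_zmod n (by omega) j hj
    refine ⟨y ^ k, N.pow_mem hyN k, ?_⟩
    simp only [SubmonoidClass.coe_pow, hyj, aux_r_pow, hk]
  obtain ⟨x, hx1⟩ := Subgroup.ne_bot_iff_exists_ne_one.mp h
  have hxN : (x : H) ∈ N := x.2
  have hxne : ((x : H) : DihedralGroup (2 ^ n)) ≠ 1 := by
    intro hc
    exact hx1 (by ext; simpa using hc)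
  cases hcase : ((x : H) : DihedralGroup (2 ^ n)) with
  | r j =>
      refine rot x j hxN hcase ?_
      intro hj0
      exact hxne (by rw [hcase, hj0, ← one_def])
  | sr j =>
      have h2H : (r 2 : DihedralGroup (2 ^ n)) ∈ H := by
        have := Subgroup.mul_self_mem_of_index_two hidx (r 1)
        simpa [one_add_one_eq_two] using this
      set g : H := ⟨r 2, h2H⟩ with hg
      have hconj : g * (x : H) * g⁻¹ ∈ N := hN.conj_mem _ hxN g
      have hmem : (g * (x : H) * g⁻¹) * (x : H) ∈ N := N.mul_mem hconj hxN
      have hco : (((g * (x : H) * g⁻¹) * (x : H) : H) : DihedralGroup (2 ^ n)) = r 4 := by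
        push_cast
        rw [hcase]
        show r 2 * sr j * r (-2) * sr j = r 4
        rw [r_mul_sr, sr_mul_r, sr_mul_sr]
        congr 1
        ring
      refine rot _ 4 hmem hco ?_
      have : ((4 : ℕ) : ZMod (2 ^ n)) ≠ 0 := by
        rw [Ne, ZMod.natCast_eq_zero_iff]
        intro hdvd
        have := Nat.le_of_dvd (by norm_num) hdvd
        have : 2 ^ 3 ≤ 2 ^ n := Nat.pow_le_pow_right (by norm_num) hn
        omega
      simpa using this

/-- For `n ≥ 3`, every subgroup of index `2` of the dihedral group `D_{2^n}`
(of order `2^{n+1}`) is subdirectly irreducible: any two nontrivial normal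
subgroups of it have nontrivial intersection. -/
theorem dihedral_index_two_subgroups_subdirectly_irreducible
    (n : ℕ) (hn : 3 ≤ n)
    (H : Subgroup (DihedralGroup (2 ^ n))) (hidx : H.index = 2)
    (N₁ N₂ : Subgroup H) (hN₁ : N₁.Normal) (hN₂ : N₂.Normal)
    (h₁ : N₁ ≠ ⊥) (h₂ : N₂ ≠ ⊥) :
    N₁ ⊓ N₂ ≠ ⊥ := by
  obtain ⟨y₁, hy₁, hc₁⟩ := aux_key n hn H hidx N₁ hN₁ h₁
  obtain ⟨y₂, hy₂, hc₂⟩ := aux_key n hn H hidx N₂ hN₂ h₂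
  have hy12 : y₁ = y₂ := by ext; rw [hc₁, hc₂]
  have hmem : y₁ ∈ N₁ ⊓ N₂ := ⟨hy₁, hy12 ▸ hy₂⟩
  intro hbot
  have hy1 : y₁ = 1 := Subgroup.eq_bot_iff_forall _ |>.mp hbot y₁ hmem
  have : (y₁ : DihedralGroup (2 ^ n)) = 1 := by rw [hy1]; rfl
  rw [hc₁, one_def] at this
  have hj : ((2 ^ (n - 1) : ℕ) : ZMod (2 ^ n)) = 0 := by
    injection this
  rw [ZMod.natCast_eq_zero_iff] at hj
  have := Nat.le_of_dvd (Nat.pow_pos (n := n - 1) (by norm_num : 0 < 2)) hj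
  have h1 : 2 ^ (n - 1) < 2 ^ n := Nat.pow_lt_pow_right (by norm_num) (by omega)
  omega
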